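/- arXiv:1507.07549 — 4 statements merged into one kernel-verified Lean document; each statement's English description precedes it below -/
import Mathlib

section
/- Let E, F be vector lattices with F Dedekind complete, T : E → F a positive orthogonally additive order bounded operator, and x₁, x₂ ∈ E with x₁ ⊥ x₂. Then π^{x₁+x₂}T = π^{x₁}T + π^{x₂}T, where π^{x}T(e) = sup{T(y) : y is a fragment of both e and x}. -/
open scoped BigOperators

section Defs
variable {E F : Type*}
variable [Lattice E] [AddCommGroup E] [CovariantClass E E (· + ·) (· ≤ ·)]
variable [Lattice F] [AddCommGroup F] [CovariantClass F F (· + ·) (· ≤ ·)]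

/-- Disjointness in a vector lattice: `|x| ⊓ |y| = 0`. -/
def EDisj (x y : E) : Prop := |x| ⊓ |y| = 0

/-- `y` is a fragment (component) of `x`: `y ⊥ (x - y)`. -/
def Fragment (y x : E) : Prop := EDisj y (x - y)

/-- Orthogonally additive operator. -/
def OrthAdditive (T : E → F) : Prop := ∀ x y : E, EDisj x y → T (x + y) = T x + T y

/-- Positive (in the orthogonally additive sense). -/
def PositiveOp (T : E → F) : Prop := ∀ x : E, 0 ≤ T x

/-- Order bounded operator. -/
def OrderBoundedOp (T : E → F) : Prop :=
  ∀ a b : E, ∃ c d : F, ∀ x : E, a ≤ x → x ≤ b → c ≤ T x ∧ T x ≤ d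

/-- Abstract Uryson operator: orthogonally additive and order bounded. -/
def UrysonOp (T : E → F) : Prop := OrthAdditive T ∧ OrderBoundedOp T

/-- Lateral ideal. -/
def LateralIdeal (D : Set E) : Prop :=
  (∀ x ∈ D, ∀ y : E, Fragment y x → y ∈ D) ∧
  (∀ x ∈ D, ∀ y ∈ D, EDisj x y → x + y ∈ D)

/-- Band (order) projection on `F`. -/
def IsBandProjection (ρ : F → F) : Prop :=
  (∀ x y : F, ρ (x + y) = ρ x + ρ y) ∧ (∀ x : F, ρ (ρ x) = ρ x) ∧
  (∀ x : F, 0 ≤ x → 0 ≤ ρ x ∧ ρ x ≤ x)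

/-- Partition of unity: mutually disjoint band projections with supremum the identity. -/
def BandPartitionOfUnity {ι : Type*} (ρ : ι → F → F) : Prop :=
  (∀ i, IsBandProjection (ρ i)) ∧
  (∀ i j, i ≠ j → ∀ x : F, ρ i (ρ j x) = 0) ∧
  (∀ x : F, 0 ≤ x → IsLUB {y : F | ∃ s : Finset ι, y = ∑ i ∈ s, ρ i x} x)

/-- Weak order unit. -/
def WeakOrderUnit (u : F) : Prop := 0 ≤ u ∧ ∀ v : F, |v| ⊓ u = 0 → v = 0

/-- Order narrow operator. -/
def OrderNarrow (T : E → F) : Prop :=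
  ∀ e : E, ∃ (ι : Type) (le : ι → ι → Prop) (f g : ι → E) (u : ι → F),
    Nonempty ι ∧ (∀ a, le a a) ∧ (∀ a b c, le a b → le b c → le a c) ∧
    (∀ a b, ∃ c, le a c ∧ le b c) ∧
    (∀ a, f a + g a = e ∧ EDisj (f a) (g a)) ∧
    (∀ a b, le a b → u b ≤ u a) ∧ IsGLB (Set.range u) 0 ∧
    (∀ a, |T (f a) - T (g a)| ≤ u a)

/-- Disjointness of orthogonally additive operators, via the pointwise infimum formula. -/
def OpDisjoint (S R : E → F) : Prop :=
  ∀ f : E, IsGLB {v : F | ∃ g₁ g₂ : E, g₁ + g₂ = f ∧ EDisj g₁ g₂ ∧ v = S g₁ + R g₂} 0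

/-- `S` is a fragment of `T` in `U(E,F)`: `S ⊥ (T - S)`. -/
def OpFragment (S T : E → F) : Prop := OpDisjoint S (fun e => T e - S e)

end Defs

/-- Atomless vector lattice: every nonzero element has a nontrivial fragment. -/
def AtomlessVL (E : Type*) [Lattice E] [AddCommGroup E]
    [CovariantClass E E (· + ·) (· ≤ ·)] : Prop :=
  ∀ e : E, e ≠ 0 → ∃ y : E, Fragment y e ∧ y ≠ 0 ∧ y ≠ e

/-- Principal projection property: the band generated by any element is a projection band. -/
def HasPPP (E : Type*) [Lattice E] [AddCommGroup E]
    [CovariantClass E E (· + ·) (· ≤ ·)] : Prop :=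
  ∀ e : E, ∃ ρ : E → E,
    (∀ x y : E, ρ (x + y) = ρ x + ρ y) ∧ (∀ x : E, 0 ≤ x → 0 ≤ ρ x ∧ ρ x ≤ x) ∧
    ρ e = e ∧ (∀ x : E, EDisj x e → ρ x = 0) ∧ (∀ x : E, EDisj (x - ρ x) e)

section PiX
variable {E F : Type*}
variable [Lattice E] [AddCommGroup E] [CovariantClass E E (· + ·) (· ≤ ·)]
variable [ConditionallyCompleteLattice F] [AddCommGroup F]
variable [CovariantClass F F (· + ·) (· ≤ ·)]

/-- `π^x T (e) = sup { T y : y ⊑ e, y ⊑ x }`. -/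
noncomputable def piX (T : E → F) (x : E) : E → F :=
  fun e => sSup {v : F | ∃ y : E, Fragment y e ∧ Fragment y x ∧ v = T y}

/-- `π^D T (e) = sup { T y : y ⊑ e, y ∈ D }` for a lateral ideal `D`. -/
noncomputable def piD (T : E → F) (D : Set E) : E → F :=
  fun e => sSup {v : F | ∃ y : E, Fragment y e ∧ y ∈ D ∧ v = T y}

end PiX


section Helpers
variable {G : Type*} [Lattice G] [AddCommGroup G] [CovariantClass G G (· + ·) (· ≤ ·)]

/-- Birkhoff inequality: `u ⊓ (v + w) ≤ u ⊓ v + u ⊓ w` for nonneg elements. -/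
lemma aux_inf_add_le (u v w : G) (hu : 0 ≤ u) (hv : 0 ≤ v) (hw : 0 ≤ w) :
    u ⊓ (v + w) ≤ u ⊓ v + u ⊓ w := by
  have hd : u ⊓ (v + w) - u ⊓ v ≤ u ⊓ w := by
    apply le_inf
    · have h1 : u ⊓ (v + w) ≤ u ⊓ v + u := le_trans inf_le_left (le_add_of_nonneg_left (le_inf hu hv))
      exact sub_le_iff_le_add.2 (h1.trans_eq (add_comm _ _))
    · have h2 : u ⊓ (v + w) - w ≤ u ⊓ v := by
        apply le_inf
        · exact sub_le_iff_le_add.2 (le_trans inf_le_left (le_add_of_nonneg_right hw))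
        · exact sub_le_iff_le_add.2 (by simpa [add_comm] using (inf_le_right :
            u ⊓ (v + w) ≤ v + w))
      calc u ⊓ (v + w) - u ⊓ v ≤ u ⊓ (v + w) - (u ⊓ (v + w) - w) := by
            exact sub_le_sub_left h2 _
        _ = w := by abel
  have := sub_le_iff_le_add.1 hd
  rwa [add_comm (u ⊓ w)] at this

lemma aux_disj_mono {c a c' a' : G} (hc' : 0 ≤ c') (ha' : 0 ≤ a')
    (hcc : c' ≤ c) (haa : a' ≤ a) (h : c ⊓ a = 0) : c' ⊓ a' = 0 :=
  le_antisymm (h ▸ inf_le_inf hcc haa) (le_inf hc' ha')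

lemma aux_disj_add {c a b : G} (hc : 0 ≤ c) (ha : 0 ≤ a) (hb : 0 ≤ b)
    (h1 : c ⊓ a = 0) (h2 : c ⊓ b = 0) : c ⊓ (a + b) = 0 := by
  refine le_antisymm ?_ (le_inf hc (add_nonneg ha hb))
  calc c ⊓ (a + b) ≤ c ⊓ a + c ⊓ b := aux_inf_add_le c a b hc ha hb
    _ = 0 := by rw [h1, h2, add_zero]

/-- `c ⊓ (a + b) = c ⊓ a + c ⊓ b` for disjoint nonneg `a b` and nonneg `c`. -/
lemma aux_inf_add_distrib {c a b : G} (hc : 0 ≤ c) (ha : 0 ≤ a) (hb : 0 ≤ b)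
    (hab : a ⊓ b = 0) : c ⊓ (a + b) = c ⊓ a + c ⊓ b := by
  letI := AddCommGroup.toDistribLattice G
  have h1 : a + b = a ⊔ b := by
    have := inf_add_sup a b
    rw [hab, zero_add] at this; exact this.symm
  have h2 : (c ⊓ a) ⊓ (c ⊓ b) = 0 :=
    aux_disj_mono (le_inf hc ha) (le_inf hc hb) inf_le_right inf_le_right hab
  have h3 : (c ⊓ a) + (c ⊓ b) = (c ⊓ a) ⊔ (c ⊓ b) := by
    have := inf_add_sup (c ⊓ a) (c ⊓ b)
    rw [h2, zero_add] at this; exact this.symm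
  rw [h1, h3, inf_sup_left]

/-- For disjoint elements, `|a| ≤ |a + b|`. -/
lemma aux_abs_le_abs_add {a b : G} (h : |a| ⊓ |b| = 0) : |a| ≤ |a + b| := by
  have h1 : |a| ≤ |a + b| + |b| := by
    calc |a| = |a + b + -b| := by rw [add_neg_cancel_right]
      _ ≤ |a + b| + |-b| := abs_add_le _ _
      _ = |a + b| + |b| := by rw [abs_neg]
  have h2 : |a| = |a| ⊓ (|a + b| + |b|) := (inf_eq_left.2 h1).symm
  calc |a| = |a| ⊓ (|a + b| + |b|) := h2
    _ ≤ |a| ⊓ |a + b| + |a| ⊓ |b| :=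
        aux_inf_add_le _ _ _ (abs_nonneg a) (abs_nonneg _) (abs_nonneg b)
    _ = |a| ⊓ |a + b| := by rw [h, add_zero]
    _ ≤ |a + b| := inf_le_right

end Helpers

section FragLemmas
variable {G : Type*} [Lattice G] [AddCommGroup G] [CovariantClass G G (· + ·) (· ≤ ·)]

lemma aux_frag_zero (x : G) : Fragment 0 x := by
  simp [Fragment, EDisj, inf_eq_right.2 (abs_nonneg x)]

lemma aux_frag_abs_le {y x : G} (h : Fragment y x) : |y| ≤ |x| := by
  have := aux_abs_le_abs_add (h : |y| ⊓ |x - y| = 0)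
  simpa using this

lemma aux_frag_abs_le' {y x : G} (h : Fragment y x) : |x - y| ≤ |x| := by
  have h' : |x - y| ⊓ |y| = 0 := by rw [inf_comm]; exact h
  have := aux_abs_le_abs_add h'
  simpa using this

/-- Sum of disjoint fragments is a fragment. -/
lemma aux_frag_add {y₁ y₂ e : G} (h1 : Fragment y₁ e) (h2 : Fragment y₂ e)
    (hd : EDisj y₁ y₂) : Fragment (y₁ + y₂) e := by
  have a1 : |y₁| ⊓ |e - (y₁ + y₂)| = 0 := by
    have he : e - (y₁ + y₂) = (e - y₁) + -y₂ := by abel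
    have : |e - (y₁ + y₂)| ≤ |e - y₁| + |y₂| := by
      rw [he]; exact (abs_add_le _ _).trans_eq (by rw [abs_neg])
    exact aux_disj_mono (abs_nonneg _) (abs_nonneg _) le_rfl this
      (aux_disj_add (abs_nonneg _) (abs_nonneg _) (abs_nonneg _) h1 hd)
  have a2 : |y₂| ⊓ |e - (y₁ + y₂)| = 0 := by
    have he : e - (y₁ + y₂) = (e - y₂) + -y₁ := by abel
    have : |e - (y₁ + y₂)| ≤ |e - y₂| + |y₁| := by
      rw [he]; exact (abs_add_le _ _).trans_eq (by rw [abs_neg])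
    refine aux_disj_mono (abs_nonneg _) (abs_nonneg _) le_rfl this
      (aux_disj_add (abs_nonneg _) (abs_nonneg _) (abs_nonneg _) h2 ?_)
    rw [inf_comm]; exact hd
  have : (|y₁| + |y₂|) ⊓ |e - (y₁ + y₂)| = 0 := by
    rw [inf_comm]
    rw [inf_comm] at a1 a2
    exact aux_disj_add (abs_nonneg _) (abs_nonneg _) (abs_nonneg _) a1 a2
  exact aux_disj_mono (abs_nonneg _) (abs_nonneg _) (abs_add_le _ _) le_rfl this

/-- `|p - n| = p + n` for disjoint nonneg `p`, `n`. -/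
lemma aux_abs_sub_of_disj {p n : G} (hp : 0 ≤ p) (hn : 0 ≤ n) (hpn : p ⊓ n = 0) :
    |p - n| = p + n := by
  have hsup : p ⊔ n = p + n := by
    have := inf_add_sup p n; rw [hpn, zero_add] at this; exact this
  have h1 : (p - n)⁺ = p := by
    rw [posPart_def]
    calc (p - n) ⊔ 0 = (p - n) ⊔ (n - n) := by rw [sub_self]
      _ = (p ⊔ n) - n := (sup_sub p n n).symm
      _ = p := by rw [hsup]; abel
  have h2 : (p - n)⁻ = n := by
    rw [negPart_def, neg_sub]
    calc (n - p) ⊔ 0 = (n - p) ⊔ (p - p) := by rw [sub_self]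
      _ = (n ⊔ p) - p := (sup_sub n p p).symm
      _ = n := by rw [sup_comm, hsup]; abel
  rw [← posPart_add_negPart (p - n), h1, h2]

/-- Decomposition of a fragment of a disjoint sum. -/
lemma aux_frag_decomp {x₁ x₂ y : G} (hd : EDisj x₁ x₂) (hy : Fragment y (x₁ + x₂)) :
    ∃ y₁ y₂ : G, y = y₁ + y₂ ∧ EDisj y₁ y₂ ∧
      Fragment y₁ x₁ ∧ Fragment y₂ x₂ ∧
      (∀ e : G, Fragment y e → Fragment y₁ e ∧ Fragment y₂ e) := by
  set a₁ : G := |x₁| with ha₁d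
  set a₂ : G := |x₂| with ha₂d
  have hdd : a₁ ⊓ a₂ = 0 := hd
  have ha₁0 : (0:G) ≤ a₁ := abs_nonneg _
  have ha₂0 : (0:G) ≤ a₂ := abs_nonneg _
  have hyabs : |y| ≤ a₁ + a₂ := (aux_frag_abs_le hy).trans (abs_add_le _ _)
  have hppnn : y⁺ ⊓ y⁻ = 0 := posPart_inf_negPart_eq_zero y
  have hp0 : (0:G) ≤ y⁺ := posPart_nonneg y
  have hn0 : (0:G) ≤ y⁻ := negPart_nonneg y
  have hple : y⁺ ≤ |y| := by
    rw [posPart_def]; exact sup_le (le_abs_self y) (abs_nonneg y)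
  have hnle : y⁻ ≤ |y| := by
    rw [negPart_def]; exact sup_le (neg_le_abs y) (abs_nonneg y)
  set z₁ : G := y⁺ ⊓ a₁ - y⁻ ⊓ a₁ with hz₁d
  set z₂ : G := y⁺ ⊓ a₂ - y⁻ ⊓ a₂ with hz₂d
  have habs : ∀ a : G, 0 ≤ a → |y⁺ ⊓ a - y⁻ ⊓ a| = |y| ⊓ a := by
    intro a ha
    have hpn : (y⁺ ⊓ a) ⊓ (y⁻ ⊓ a) = 0 :=
      aux_disj_mono (le_inf hp0 ha) (le_inf hn0 ha) inf_le_left inf_le_left hppnn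
    rw [aux_abs_sub_of_disj (le_inf hp0 ha) (le_inf hn0 ha) hpn]
    have h2 := aux_inf_add_distrib ha hp0 hn0 hppnn
    rw [posPart_add_negPart] at h2
    rw [inf_comm a (|y|)] at h2
    rw [h2, inf_comm (y⁺) a, inf_comm (y⁻) a]
  have habs1 : |z₁| = |y| ⊓ a₁ := habs _ ha₁0
  have habs2 : |z₂| = |y| ⊓ a₂ := habs _ ha₂0
  have hz1le : |z₁| ≤ a₁ := habs1.trans_le inf_le_right
  have hz2le : |z₂| ≤ a₂ := habs2.trans_le inf_le_right
  have hz1ley : |z₁| ≤ |y| := habs1.trans_le inf_le_left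
  have hz2ley : |z₂| ≤ |y| := habs2.trans_le inf_le_left
  have hsum : y = z₁ + z₂ := by
    have hsplitp : y⁺ = y⁺ ⊓ a₁ + y⁺ ⊓ a₂ := by
      have hle : y⁺ ≤ a₁ + a₂ := hple.trans hyabs
      have h3 := aux_inf_add_distrib hp0 ha₁0 ha₂0 hdd
      rw [← h3, inf_eq_left.2 hle]
    have hsplitn : y⁻ = y⁻ ⊓ a₁ + y⁻ ⊓ a₂ := by
      have hle : y⁻ ≤ a₁ + a₂ := hnle.trans hyabs
      have h3 := aux_inf_add_distrib hn0 ha₁0 ha₂0 hdd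
      rw [← h3, inf_eq_left.2 hle]
    rw [hz₁d, hz₂d]
    conv_lhs => rw [← posPart_sub_negPart y]
    nth_rewrite 1 [hsplitp, hsplitn]
    abel
  refine ⟨z₁, z₂, hsum, ?_, ?_, ?_, ?_⟩
  · exact aux_disj_mono (abs_nonneg _) (abs_nonneg _) hz1le hz2le hdd
  · -- Fragment z₁ x₁
    show |z₁| ⊓ |x₁ - z₁| = 0
    have hx : x₁ - z₁ = ((x₁ + x₂) - y) + -(x₂ - z₂) := by rw [hsum]; abel
    have hb : |x₁ - z₁| ≤ |(x₁ + x₂) - y| + (a₂ + a₂) := by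
      rw [hx]
      have h1 : |(-(x₂ - z₂) : G)| ≤ a₂ + a₂ := by
        rw [abs_neg, sub_eq_add_neg]
        calc |x₂ + -z₂| ≤ |x₂| + |(-z₂ : G)| := abs_add_le _ _
          _ ≤ a₂ + a₂ := add_le_add le_rfl (by rw [abs_neg]; exact hz2le)
      exact (abs_add_le _ _).trans (add_le_add le_rfl h1)
    refine aux_disj_mono (abs_nonneg _) (abs_nonneg _) le_rfl hb ?_
    refine aux_disj_add (abs_nonneg _) (abs_nonneg _) (add_nonneg ha₂0 ha₂0) ?_ ?_
    · exact aux_disj_mono (abs_nonneg _) (abs_nonneg _) hz1ley le_rfl hy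
    · exact aux_disj_mono (abs_nonneg _) (add_nonneg ha₂0 ha₂0) hz1le le_rfl
        (aux_disj_add ha₁0 ha₂0 ha₂0 hdd hdd)
  · -- Fragment z₂ x₂
    show |z₂| ⊓ |x₂ - z₂| = 0
    have hx : x₂ - z₂ = ((x₁ + x₂) - y) + -(x₁ - z₁) := by rw [hsum]; abel
    have hb : |x₂ - z₂| ≤ |(x₁ + x₂) - y| + (a₁ + a₁) := by
      rw [hx]
      have h1 : |(-(x₁ - z₁) : G)| ≤ a₁ + a₁ := by
        rw [abs_neg, sub_eq_add_neg]
        calc |x₁ + -z₁| ≤ |x₁| + |(-z₁ : G)| := abs_add_le _ _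
          _ ≤ a₁ + a₁ := add_le_add le_rfl (by rw [abs_neg]; exact hz1le)
      exact (abs_add_le _ _).trans (add_le_add le_rfl h1)
    refine aux_disj_mono (abs_nonneg _) (abs_nonneg _) le_rfl hb ?_
    refine aux_disj_add (abs_nonneg _) (abs_nonneg _) (add_nonneg ha₁0 ha₁0) ?_ ?_
    · exact aux_disj_mono (abs_nonneg _) (abs_nonneg _) hz2ley le_rfl hy
    · refine aux_disj_mono (abs_nonneg _) (add_nonneg ha₁0 ha₁0) hz2le le_rfl ?_
      rw [inf_comm] at hdd
      exact aux_disj_add ha₂0 ha₁0 ha₁0 hdd hdd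
  · intro e he
    constructor
    · show |z₁| ⊓ |e - z₁| = 0
      have hx : e - z₁ = (e - y) + z₂ := by rw [hsum]; abel
      have hb : |e - z₁| ≤ |e - y| + a₂ := by
        rw [hx]; exact (abs_add_le _ _).trans (add_le_add le_rfl hz2le)
      refine aux_disj_mono (abs_nonneg _) (abs_nonneg _) le_rfl hb ?_
      refine aux_disj_add (abs_nonneg _) (abs_nonneg _) ha₂0 ?_ ?_
      · exact aux_disj_mono (abs_nonneg _) (abs_nonneg _) hz1ley le_rfl he
      · exact aux_disj_mono (abs_nonneg _) ha₂0 hz1le le_rfl hdd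
    · show |z₂| ⊓ |e - z₂| = 0
      have hx : e - z₂ = (e - y) + z₁ := by rw [hsum]; abel
      have hb : |e - z₂| ≤ |e - y| + a₁ := by
        rw [hx]; exact (abs_add_le _ _).trans (add_le_add le_rfl hz1le)
      refine aux_disj_mono (abs_nonneg _) (abs_nonneg _) le_rfl hb ?_
      refine aux_disj_add (abs_nonneg _) (abs_nonneg _) ha₁0 ?_ ?_
      · exact aux_disj_mono (abs_nonneg _) (abs_nonneg _) hz2ley le_rfl he
      · refine aux_disj_mono (abs_nonneg _) ha₁0 hz2le le_rfl ?_
        rw [inf_comm] at hdd; exact hdd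

end FragLemmas

/-- A fragment of `x₁` is a fragment of `x₁ + x₂` when `x₁ ⊥ x₂`. -/
lemma aux_frag_add_right {G : Type*} [Lattice G] [AddCommGroup G]
    [CovariantClass G G (· + ·) (· ≤ ·)] {y x₁ x₂ : G}
    (h : Fragment y x₁) (hd : EDisj x₁ x₂) : Fragment y (x₁ + x₂) := by
  show |y| ⊓ |x₁ + x₂ - y| = 0
  have hx : x₁ + x₂ - y = (x₁ - y) + x₂ := by abel
  have hb : |x₁ + x₂ - y| ≤ |x₁ - y| + |x₂| := by rw [hx]; exact abs_add_le _ _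
  refine aux_disj_mono (abs_nonneg _) (abs_nonneg _) le_rfl hb ?_
  refine aux_disj_add (abs_nonneg _) (abs_nonneg _) (abs_nonneg _) h ?_
  exact aux_disj_mono (abs_nonneg _) (abs_nonneg _) (aux_frag_abs_le h) le_rfl hd

theorem piX_add_of_disjoint {E F : Type*} [Lattice E] [AddCommGroup E] [CovariantClass E E (· + ·) (· ≤ ·)] [Module ℝ E] [ConditionallyCompleteLattice F] [AddCommGroup F] [CovariantClass F F (· + ·) (· ≤ ·)] [Module ℝ F]
    (T : E → F) (hT : UrysonOp T) (hpos : PositiveOp T)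
    (x₁ x₂ : E) (hd : EDisj x₁ x₂) :
    ∀ e : E, piX T (x₁ + x₂) e = piX T x₁ e + piX T x₂ e := by
  intro e
  set A : Set F := {v : F | ∃ y : E, Fragment y e ∧ Fragment y (x₁ + x₂) ∧ v = T y} with hA
  set A₁ : Set F := {v : F | ∃ y : E, Fragment y e ∧ Fragment y x₁ ∧ v = T y} with hA₁
  set A₂ : Set F := {v : F | ∃ y : E, Fragment y e ∧ Fragment y x₂ ∧ v = T y} with hA₂
  -- nonemptiness
  have hne : ∀ x : E, (({v : F | ∃ y : E, Fragment y e ∧ Fragment y x ∧ v = T y}) : Set F).Nonempty :=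
    fun x => ⟨T 0, 0, aux_frag_zero e, aux_frag_zero x, rfl⟩
  have hneA : A.Nonempty := hne (x₁ + x₂)
  have hneA₁ : A₁.Nonempty := hne x₁
  have hneA₂ : A₂.Nonempty := hne x₂
  -- boundedness
  obtain ⟨c, d, hcd⟩ := hT.2 (-|e|) |e|
  have hbdd : ∀ x : E, BddAbove (({v : F | ∃ y : E, Fragment y e ∧ Fragment y x ∧ v = T y}) : Set F) := by
    intro x
    refine ⟨d, ?_⟩
    rintro v ⟨y, hye, -, rfl⟩
    have h1 : |y| ≤ |e| := aux_frag_abs_le hye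
    have h2 : y ≤ |e| := (le_abs_self y).trans h1
    have h3 : -|e| ≤ y := by
      have h4 : -y ≤ |e| := (neg_le_abs y).trans h1
      have h5 := neg_le_neg_iff.2 h4
      rwa [neg_neg] at h5
    exact (hcd y h3 h2).2
  have hbA : BddAbove A := hbdd (x₁ + x₂)
  have hbA₁ : BddAbove A₁ := hbdd x₁
  have hbA₂ : BddAbove A₂ := hbdd x₂
  have hd' : EDisj x₂ x₁ := by rw [EDisj, inf_comm]; exact hd
  -- membership of sums
  have hmem : ∀ y₁ y₂ : E, Fragment y₁ e → Fragment y₁ x₁ → Fragment y₂ e → Fragment y₂ x₂ →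
      T y₁ + T y₂ ∈ A := by
    intro y₁ y₂ h1e h1x h2e h2x
    have hdy : EDisj y₁ y₂ :=
      aux_disj_mono (abs_nonneg _) (abs_nonneg _) (aux_frag_abs_le h1x)
        (aux_frag_abs_le h2x) hd
    refine ⟨y₁ + y₂, aux_frag_add h1e h2e hdy, ?_, (hT.1 y₁ y₂ hdy).symm⟩
    refine aux_frag_add (aux_frag_add_right h1x hd) ?_ hdy
    have := aux_frag_add_right h2x hd'
    rwa [add_comm x₂ x₁] at this
  show sSup A = sSup A₁ + sSup A₂
  have hlub : IsLUB A (sSup A₁ + sSup A₂) := by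
    constructor
    · rintro v ⟨y, hye, hyx, rfl⟩
      obtain ⟨y₁, y₂, hsum, hdy, h1x, h2x, hfe⟩ := aux_frag_decomp hd hyx
      obtain ⟨h1e, h2e⟩ := hfe e hye
      have hTy : T y = T y₁ + T y₂ := by rw [hsum]; exact hT.1 y₁ y₂ hdy
      rw [hTy]
      exact add_le_add (le_csSup hbA₁ ⟨y₁, h1e, h1x, rfl⟩)
        (le_csSup hbA₂ ⟨y₂, h2e, h2x, rfl⟩)
    · intro u hu
      have key : ∀ y₁ : E, Fragment y₁ e → Fragment y₁ x₁ → T y₁ + sSup A₂ ≤ u := by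
        intro y₁ h1e h1x
        have hs2 : sSup A₂ ≤ -T y₁ + u := by
          refine csSup_le hneA₂ ?_
          rintro v ⟨y₂, h2e, h2x, rfl⟩
          exact le_neg_add_iff_add_le.2 (hu (hmem y₁ y₂ h1e h1x h2e h2x))
        calc T y₁ + sSup A₂ ≤ T y₁ + (-T y₁ + u) := add_le_add_right hs2 _
          _ = u := by abel
      have hs1 : sSup A₁ ≤ u - sSup A₂ := by
        refine csSup_le hneA₁ ?_
        rintro v ⟨y₁, h1e, h1x, rfl⟩
        exact le_sub_iff_add_le.2 (key y₁ h1e h1x)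
      calc sSup A₁ + sSup A₂ ≤ (u - sSup A₂) + sSup A₂ := by
            exact add_le_add hs1 le_rfl
        _ = u := by abel
  exact hlub.csSup_eq hneA
end

section
/- Let E, F be vector lattices with F Dedekind complete, and S, T : E → F abstract Uryson operators. Then for every f ∈ E: (S ∨ T)(f) = sup{S(g₁) + T(g₂) : f = g₁ + g₂, g₁ ⊥ g₂} and (S ∧ T)(f) = inf{S(g₁) + T(g₂) : f = g₁ + g₂, g₁ ⊥ g₂}. -/
open scoped BigOperators

section Aux
variable {α : Type*} [Lattice α] [AddCommGroup α] [CovariantClass α α (· + ·) (· ≤ ·)]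

lemma edisj_symm {x y : α} (h : EDisj x y) : EDisj y x := by
  rwa [EDisj, inf_comm]

lemma edisj_zero (x : α) : EDisj x 0 := by
  rw [EDisj, abs_zero]
  exact inf_eq_right.2 (abs_nonneg x)

lemma zero_edisj (x : α) : EDisj 0 x := edisj_symm (edisj_zero x)

lemma inf_eq_zero_of_le {a b c d : α} (h : c ≤ a) (h' : d ≤ b) (hab : a ⊓ b = 0)
    (hc : 0 ≤ c) (hd : 0 ≤ d) : c ⊓ d = 0 :=
  le_antisymm (le_trans (inf_le_inf h h') hab.le) (le_inf hc hd)

lemma posPart_le_abs' (a : α) : a⁺ ≤ |a| := by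
  rw [← posPart_add_negPart]
  exact le_add_of_nonneg_right (negPart_nonneg a)

lemma negPart_le_abs' (a : α) : a⁻ ≤ |a| := by
  rw [← posPart_add_negPart]
  exact le_add_of_nonneg_left (posPart_nonneg a)

lemma inf_add_le' {a b c : α} (ha : 0 ≤ a) (hb : 0 ≤ b) (hc : 0 ≤ c) :
    c ⊓ (a + b) ≤ c ⊓ a + c ⊓ b := by
  set d := c ⊓ (a + b) with hd
  have h1 : d - c ⊓ a ≤ b := by
    rw [sub_inf]
    refine sup_le ?_ ?_
    · exact le_trans (sub_nonpos.2 inf_le_left) hb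
    · rw [sub_le_iff_le_add, add_comm]
      exact inf_le_right
  have h2 : d - c ⊓ a ≤ c :=
    le_trans (sub_le_sub inf_le_left (le_inf hc ha)) (by rw [sub_zero])
  have : d - c ⊓ a ≤ c ⊓ b := le_inf h2 h1
  calc d = c ⊓ a + (d - c ⊓ a) := by abel
  _ ≤ c ⊓ a + c ⊓ b := add_le_add_right this _

lemma add_eq_sup_of_inf_zero {a b : α} (h : a ⊓ b = 0) : a + b = a ⊔ b := by
  rw [← inf_add_sup a b, h, zero_add]

lemma riesz_split {a b c : α} (ha : 0 ≤ a) (hb : 0 ≤ b) (hab : a ⊓ b = 0)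
    (hc0 : 0 ≤ c) (hc : c ≤ a + b) : c = c ⊓ a + c ⊓ b := by
  refine le_antisymm ?_ ?_
  · have h := inf_add_le' ha hb hc0
    rwa [inf_eq_left.2 hc] at h
  · have hdisj : (c ⊓ a) ⊓ (c ⊓ b) = 0 :=
      inf_eq_zero_of_le inf_le_right inf_le_right hab (le_inf hc0 ha) (le_inf hc0 hb)
    rw [add_eq_sup_of_inf_zero hdisj]
    exact sup_le inf_le_left inf_le_left

lemma sum_inf_sum_eq_zero {a b c d : α} (ha : 0 ≤ a) (hb : 0 ≤ b) (hc : 0 ≤ c) (hd : 0 ≤ d)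
    (h1 : a ⊓ c = 0) (h2 : a ⊓ d = 0) (h3 : b ⊓ c = 0) (h4 : b ⊓ d = 0) :
    (a + b) ⊓ (c + d) = 0 := by
  refine le_antisymm ?_ (le_inf (add_nonneg ha hb) (add_nonneg hc hd))
  calc (a + b) ⊓ (c + d) ≤ (a + b) ⊓ c + (a + b) ⊓ d :=
        inf_add_le' hc hd (add_nonneg ha hb)
  _ ≤ (a ⊓ c + b ⊓ c) + (a ⊓ d + b ⊓ d) := by
        refine add_le_add ?_ ?_
        · rw [inf_comm]
          exact le_trans (inf_add_le' ha hb hc) (by rw [inf_comm c a, inf_comm c b])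
        · rw [inf_comm]
          exact le_trans (inf_add_le' ha hb hd) (by rw [inf_comm d a, inf_comm d b])
  _ = 0 := by rw [h1, h2, h3, h4]; abel

lemma posPart_negPart_of_disj {u v : α} (hu : 0 ≤ u) (hv : 0 ≤ v) (huv : u ⊓ v = 0) :
    (u - v)⁺ = u ∧ (u - v)⁻ = v := by
  have h1 : (u - v)⁺ = u := by
    rw [posPart_def]
    have : (u - v) ⊔ 0 = (u ⊔ v) - v := by rw [sup_sub, sub_self]
    rw [this, ← add_eq_sup_of_inf_zero huv, add_sub_cancel_right]
  refine ⟨h1, ?_⟩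
  have h2 : (u - v)⁺ - (u - v)⁻ = u - v := posPart_sub_negPart _
  rw [h1] at h2
  have h3 : u - (u - v)⁻ = u - v := h2
  exact sub_right_injective h3

set_option linter.unusedVariables false

/-- The four "part" disjointness facts from `EDisj`. -/
lemma pp_disj {x y : α} (h : EDisj x y) : x⁺ ⊓ y⁺ = 0 :=
  inf_eq_zero_of_le (posPart_le_abs' x) (posPart_le_abs' y) h (posPart_nonneg x) (posPart_nonneg y)

lemma pn_disj {x y : α} (h : EDisj x y) : x⁺ ⊓ y⁻ = 0 :=
  inf_eq_zero_of_le (posPart_le_abs' x) (negPart_le_abs' y) h (posPart_nonneg x) (negPart_nonneg y)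

lemma np_disj {x y : α} (h : EDisj x y) : x⁻ ⊓ y⁺ = 0 :=
  inf_eq_zero_of_le (negPart_le_abs' x) (posPart_le_abs' y) h (negPart_nonneg x) (posPart_nonneg y)

lemma nn_disj {x y : α} (h : EDisj x y) : x⁻ ⊓ y⁻ = 0 :=
  inf_eq_zero_of_le (negPart_le_abs' x) (negPart_le_abs' y) h (negPart_nonneg x) (negPart_nonneg y)

lemma pos_neg_decomp {g h : α} (hd : EDisj g h) :
    (g + h)⁺ = g⁺ + h⁺ ∧ (g + h)⁻ = g⁻ + h⁻ := by
  have hdisj : (g⁺ + h⁺) ⊓ (g⁻ + h⁻) = 0 :=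
    sum_inf_sum_eq_zero (posPart_nonneg g) (posPart_nonneg h) (negPart_nonneg g)
      (negPart_nonneg h) (posPart_inf_negPart_eq_zero g) (pn_disj hd)
      (pn_disj (edisj_symm hd)) (posPart_inf_negPart_eq_zero h)
  have hsum : (g⁺ + h⁺) - (g⁻ + h⁻) = g + h := by
    rw [sub_add_eq_sub_sub_swap]
    rw [show g⁺ + h⁺ - h⁻ - g⁻ = (g⁺ - g⁻) + (h⁺ - h⁻) by abel,
      posPart_sub_negPart, posPart_sub_negPart]
  have := posPart_negPart_of_disj (add_nonneg (posPart_nonneg g) (posPart_nonneg h))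
    (add_nonneg (negPart_nonneg g) (negPart_nonneg h)) hdisj
  rw [hsum] at this
  exact this

lemma abs_add_of_edisj {g h : α} (hd : EDisj g h) : |g + h| = |g| + |h| := by
  obtain ⟨h1, h2⟩ := pos_neg_decomp hd
  rw [← posPart_add_negPart (g + h), h1, h2, ← posPart_add_negPart g, ← posPart_add_negPart h]
  abel

lemma abs_sub_of_disj {u v : α} (hu : 0 ≤ u) (hv : 0 ≤ v) (huv : u ⊓ v = 0) :
    |u - v| = u + v := by
  obtain ⟨h1, h2⟩ := posPart_negPart_of_disj hu hv huv
  rw [← posPart_add_negPart (u - v), h1, h2]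

lemma abs_le_of_frag {g₁ g₂ : α} (hd : EDisj g₁ g₂) : |g₁| ≤ |g₁ + g₂| := by
  rw [abs_add_of_edisj hd]
  exact le_add_of_nonneg_right (abs_nonneg g₂)

lemma inner_disj {p q r s : α} (hp : 0 ≤ p) (hq : 0 ≤ q) (hr : 0 ≤ r) (hs : 0 ≤ s)
    (h : p ⊓ r = 0 ∨ q ⊓ s = 0) : (p ⊓ q) ⊓ (r ⊓ s) = 0 := by
  rcases h with h | h
  · exact inf_eq_zero_of_le inf_le_left inf_le_left h (le_inf hp hq) (le_inf hr hs)
  · exact inf_eq_zero_of_le inf_le_right inf_le_right h (le_inf hp hq) (le_inf hr hs)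

lemma abs_part (g x : α) : |g⁺ ⊓ x⁺ - g⁻ ⊓ x⁻| = g⁺ ⊓ x⁺ + g⁻ ⊓ x⁻ :=
  abs_sub_of_disj (le_inf (posPart_nonneg _) (posPart_nonneg _))
    (le_inf (negPart_nonneg _) (negPart_nonneg _))
    (inner_disj (posPart_nonneg _) (posPart_nonneg _) (negPart_nonneg _) (negPart_nonneg _)
      (Or.inl (posPart_inf_negPart_eq_zero g)))

/-- Disjointness of `g⁺⊓x⁺ - g⁻⊓x⁻` and `k⁺⊓z⁺ - k⁻⊓z⁻` from inner disjointness data. -/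
lemma edisj_parts {g x k z : α} (h1 : g⁺ ⊓ k⁺ = 0 ∨ x⁺ ⊓ z⁺ = 0)
    (h2 : g⁺ ⊓ k⁻ = 0 ∨ x⁺ ⊓ z⁻ = 0) (h3 : g⁻ ⊓ k⁺ = 0 ∨ x⁻ ⊓ z⁺ = 0)
    (h4 : g⁻ ⊓ k⁻ = 0 ∨ x⁻ ⊓ z⁻ = 0) :
    EDisj (g⁺ ⊓ x⁺ - g⁻ ⊓ x⁻) (k⁺ ⊓ z⁺ - k⁻ ⊓ z⁻) := by
  rw [EDisj, abs_part, abs_part]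
  exact sum_inf_sum_eq_zero (le_inf (posPart_nonneg _) (posPart_nonneg _))
    (le_inf (negPart_nonneg _) (negPart_nonneg _))
    (le_inf (posPart_nonneg _) (posPart_nonneg _))
    (le_inf (negPart_nonneg _) (negPart_nonneg _))
    (inner_disj (posPart_nonneg _) (posPart_nonneg _) (posPart_nonneg _) (posPart_nonneg _) h1)
    (inner_disj (posPart_nonneg _) (posPart_nonneg _) (negPart_nonneg _) (negPart_nonneg _) h2)
    (inner_disj (negPart_nonneg _) (negPart_nonneg _) (posPart_nonneg _) (posPart_nonneg _) h3)
    (inner_disj (negPart_nonneg _) (negPart_nonneg _) (negPart_nonneg _) (negPart_nonneg _) h4)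

lemma main_decomp {x y g h : α} (hxy : EDisj x y) (hgh : EDisj g h) (heq : g + h = x + y) :
    ∃ a₁ a₂ b₁ b₂ : α, a₁ + a₂ = g ∧ b₁ + b₂ = h ∧ a₁ + b₁ = x ∧ a₂ + b₂ = y ∧
      EDisj a₁ a₂ ∧ EDisj b₁ b₂ ∧ EDisj a₁ b₁ ∧ EDisj a₂ b₂ := by
  obtain ⟨hgp, hgn⟩ := pos_neg_decomp hgh
  obtain ⟨hxp, hxn⟩ := pos_neg_decomp hxy
  rw [heq, hxp] at hgp
  rw [heq, hxn] at hgn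
  -- hgp : g⁺ + h⁺ = x⁺ + y⁺, hgn : g⁻ + h⁻ = x⁻ + y⁻
  refine ⟨g⁺ ⊓ x⁺ - g⁻ ⊓ x⁻, g⁺ ⊓ y⁺ - g⁻ ⊓ y⁻, h⁺ ⊓ x⁺ - h⁻ ⊓ x⁻, h⁺ ⊓ y⁺ - h⁻ ⊓ y⁻,
    ?_, ?_, ?_, ?_, ?_, ?_, ?_, ?_⟩
  -- splitting of each positive/negative part
  case _ => -- a₁ + a₂ = g
    rw [sub_add_sub_comm, ← riesz_split (posPart_nonneg x) (posPart_nonneg y) (pp_disj hxy)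
        (posPart_nonneg g) (hgp ▸ le_add_of_nonneg_right (posPart_nonneg h)),
      ← riesz_split (negPart_nonneg x) (negPart_nonneg y) (nn_disj hxy)
        (negPart_nonneg g) (hgn ▸ le_add_of_nonneg_right (negPart_nonneg h)),
      posPart_sub_negPart]
  case _ => -- b₁ + b₂ = h
    rw [sub_add_sub_comm, ← riesz_split (posPart_nonneg x) (posPart_nonneg y) (pp_disj hxy)
        (posPart_nonneg h) (hgp ▸ le_add_of_nonneg_left (posPart_nonneg g)),
      ← riesz_split (negPart_nonneg x) (negPart_nonneg y) (nn_disj hxy)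
        (negPart_nonneg h) (hgn ▸ le_add_of_nonneg_left (negPart_nonneg g)),
      posPart_sub_negPart]
  case _ => -- a₁ + b₁ = x
    rw [sub_add_sub_comm, inf_comm g⁺ x⁺, inf_comm h⁺ x⁺, inf_comm g⁻ x⁻, inf_comm h⁻ x⁻,
      ← riesz_split (posPart_nonneg g) (posPart_nonneg h) (pp_disj hgh)
        (posPart_nonneg x) (hgp ▸ le_add_of_nonneg_right (posPart_nonneg y)),
      ← riesz_split (negPart_nonneg g) (negPart_nonneg h) (nn_disj hgh)
        (negPart_nonneg x) (hgn ▸ le_add_of_nonneg_right (negPart_nonneg y)),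
      posPart_sub_negPart]
  case _ => -- a₂ + b₂ = y
    rw [sub_add_sub_comm, inf_comm g⁺ y⁺, inf_comm h⁺ y⁺, inf_comm g⁻ y⁻, inf_comm h⁻ y⁻,
      ← riesz_split (posPart_nonneg g) (posPart_nonneg h) (pp_disj hgh)
        (posPart_nonneg y) (hgp ▸ le_add_of_nonneg_left (posPart_nonneg x)),
      ← riesz_split (negPart_nonneg g) (negPart_nonneg h) (nn_disj hgh)
        (negPart_nonneg y) (hgn ▸ le_add_of_nonneg_left (negPart_nonneg x)),
      posPart_sub_negPart]
  case _ => exact edisj_parts (Or.inr (pp_disj hxy)) (Or.inl (posPart_inf_negPart_eq_zero g))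
             (Or.inl ((inf_comm _ _).trans (posPart_inf_negPart_eq_zero g))) (Or.inr (nn_disj hxy))
  case _ => exact edisj_parts (Or.inr (pp_disj hxy)) (Or.inl (posPart_inf_negPart_eq_zero h))
             (Or.inl ((inf_comm _ _).trans (posPart_inf_negPart_eq_zero h))) (Or.inr (nn_disj hxy))
  case _ => exact edisj_parts (Or.inl (pp_disj hgh)) (Or.inl (pn_disj hgh))
             (Or.inl (np_disj hgh)) (Or.inl (nn_disj hgh))
  case _ => exact edisj_parts (Or.inl (pp_disj hgh)) (Or.inl (pn_disj hgh))
             (Or.inl (np_disj hgh)) (Or.inl (nn_disj hgh))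

lemma my_neg_le_neg {a b : α} (h : a ≤ b) : -b ≤ -a := by
  have h1 := add_le_add_right (add_le_add_left h (-b)) (-a)
  simpa using h1

lemma my_le_of_neg_le_neg {a b : α} (h : -b ≤ -a) : a ≤ b := by
  simpa using my_neg_le_neg h

lemma isLUB_sum {A B : Set α} {p q : α} (hA : IsLUB A p) (hB : IsLUB B q) :
    IsLUB {v | ∃ a ∈ A, ∃ b ∈ B, v = a + b} (p + q) := by
  constructor
  · rintro v ⟨a, ha, b, hb, rfl⟩
    exact add_le_add (hA.1 ha) (hB.1 hb)
  · intro c hc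
    have h1 : ∀ a ∈ A, a + q ≤ c := by
      intro a ha
      have h2 : ∀ b ∈ B, b ≤ -a + c := fun b hb => by
        have := add_le_add_right (hc ⟨a, ha, b, hb, rfl⟩) (-a)
        rwa [neg_add_cancel_left] at this
      have h3 := hB.2 h2
      calc a + q ≤ a + (-a + c) := add_le_add_right h3 a
      _ = c := by abel
    have h4 : ∀ a ∈ A, a ≤ c - q := fun a ha => by
      have := add_le_add_left (h1 a ha) (-q)
      rwa [add_neg_cancel_right, ← sub_eq_add_neg] at this
    have h5 := hA.2 h4
    calc p + q ≤ (c - q) + q := add_le_add_left h5 q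
    _ = c := by abel

lemma isGLB_of_neg {A : Set α} {w : α} (h : IsLUB {v | ∃ a ∈ A, v = -a} (-w)) :
    IsGLB A w := by
  constructor
  · intro a ha
    have : -a ≤ -w := h.1 ⟨a, ha, rfl⟩
    exact my_le_of_neg_le_neg this
  · intro c hc
    have : -w ≤ -c := h.2 (by rintro v ⟨a, ha, rfl⟩; exact my_neg_le_neg (hc ha))
    exact my_le_of_neg_le_neg this

end Aux

section Main
variable {E F : Type*}
variable [Lattice E] [AddCommGroup E] [CovariantClass E E (· + ·) (· ≤ ·)]
variable [ConditionallyCompleteLattice F] [AddCommGroup F]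
variable [CovariantClass F F (· + ·) (· ≤ ·)]

lemma uryson_neg {T : E → F} (hT : UrysonOp T) : UrysonOp (fun e => -(T e)) := by
  refine ⟨fun x y hd => by show -T (x + y) = -T x + -T y; rw [hT.1 x y hd, neg_add], fun a b => ?_⟩
  obtain ⟨c, d, hcd⟩ := hT.2 a b
  exact ⟨-d, -c, fun x hax hxb =>
    ⟨my_neg_le_neg (hcd x hax hxb).2, my_neg_le_neg (hcd x hax hxb).1⟩⟩

lemma uryson_zero_map {T : E → F} (hT : UrysonOp T) : T 0 = 0 := by
  have h := hT.1 0 0 (edisj_zero 0)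
  rw [add_zero] at h
  exact (left_eq_add.1 h)

lemma main_lub (S T V : E → F) (hS : UrysonOp S) (hT : UrysonOp T)
    (hV : UrysonOp V ∧ (∀ x : E, S x ≤ V x) ∧ (∀ x : E, T x ≤ V x) ∧
      ∀ U : E → F, UrysonOp U → (∀ x : E, S x ≤ U x) → (∀ x : E, T x ≤ U x) →
        ∀ x : E, V x ≤ U x) :
    ∀ f : E,
      IsLUB {v : F | ∃ g₁ g₂ : E, g₁ + g₂ = f ∧ EDisj g₁ g₂ ∧ v = S g₁ + T g₂} (V f) := by
  obtain ⟨hVu, hSV, hTV, hmin⟩ := hV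
  have hT0 : T 0 = 0 := uryson_zero_map hT
  have hS0 : S 0 = 0 := uryson_zero_map hS
  set P : E → Set F :=
    fun e => {v : F | ∃ g₁ g₂ : E, g₁ + g₂ = e ∧ EDisj g₁ g₂ ∧ v = S g₁ + T g₂} with hPdef
  have hne : ∀ e, (P e).Nonempty := fun e => ⟨S e + T 0, e, 0, add_zero e, edisj_zero e, rfl⟩
  have hub : ∀ e, V e ∈ upperBounds (P e) := by
    rintro e v ⟨g₁, g₂, hsum, hd, rfl⟩
    calc S g₁ + T g₂ ≤ V g₁ + V g₂ := add_le_add (hSV g₁) (hTV g₂)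
    _ = V (g₁ + g₂) := (hVu.1 g₁ g₂ hd).symm
    _ = V e := by rw [hsum]
  set R : E → F := fun e => sSup (P e) with hRdef
  have hlub : ∀ e, IsLUB (P e) (R e) := fun e => isLUB_csSup (hne e) ⟨V e, hub e⟩
  have horth : OrthAdditive R := by
    intro x y hxy
    have hset : P (x + y) = {v | ∃ a ∈ P x, ∃ b ∈ P y, v = a + b} := by
      ext v
      constructor
      · rintro ⟨g, h, hsum, hgh, rfl⟩
        obtain ⟨a₁, a₂, b₁, b₂, hg, hh, hx, hy, d12, d34, d13, d24⟩ :=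
          main_decomp hxy hgh hsum
        refine ⟨S a₁ + T b₁, ⟨a₁, b₁, hx, d13, rfl⟩, S a₂ + T b₂, ⟨a₂, b₂, hy, d24, rfl⟩, ?_⟩
        rw [← hg, ← hh, hS.1 a₁ a₂ d12, hT.1 b₁ b₂ d34]
        abel
      · rintro ⟨a, ⟨a₁, a₂, hxs, hda, rfl⟩, b, ⟨b₁, b₂, hys, hdb, rfl⟩, rfl⟩
        have hax : |a₁| ≤ |x| := (abs_le_of_frag hda).trans_eq (by rw [hxs])
        have hax2 : |a₂| ≤ |x| :=
          (abs_le_of_frag (edisj_symm hda)).trans_eq (by rw [add_comm, hxs])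
        have hby : |b₁| ≤ |y| := (abs_le_of_frag hdb).trans_eq (by rw [hys])
        have hby2 : |b₂| ≤ |y| :=
          (abs_le_of_frag (edisj_symm hdb)).trans_eq (by rw [add_comm, hys])
        have h11 : EDisj a₁ b₁ :=
          inf_eq_zero_of_le hax hby hxy (abs_nonneg _) (abs_nonneg _)
        have h22 : EDisj a₂ b₂ :=
          inf_eq_zero_of_le hax2 hby2 hxy (abs_nonneg _) (abs_nonneg _)
        have h12 : EDisj a₁ b₂ :=
          inf_eq_zero_of_le hax hby2 hxy (abs_nonneg _) (abs_nonneg _)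
        have h21 : EDisj b₁ a₂ :=
          inf_eq_zero_of_le hby hax2 (edisj_symm hxy) (abs_nonneg _) (abs_nonneg _)
        have hd' : EDisj (a₁ + b₁) (a₂ + b₂) := by
          rw [EDisj, abs_add_of_edisj h11, abs_add_of_edisj h22]
          exact sum_inf_sum_eq_zero (abs_nonneg _) (abs_nonneg _) (abs_nonneg _)
            (abs_nonneg _) hda h12 h21 hdb
        refine ⟨a₁ + b₁, a₂ + b₂, ?_, hd', ?_⟩
        · rw [show a₁ + b₁ + (a₂ + b₂) = (a₁ + a₂) + (b₁ + b₂) by abel, hxs, hys]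
        · rw [hS.1 a₁ b₁ h11, hT.1 a₂ b₂ h22]
          abel
    have hl := isLUB_sum (hlub x) (hlub y)
    rw [← hset] at hl
    exact (hlub (x + y)).unique hl
  have hob : OrderBoundedOp R := by
    intro a b
    obtain ⟨cS, dS, hScd⟩ := hS.2 (-(|a| + |b|)) (|a| + |b|)
    obtain ⟨cT, dT, hTcd⟩ := hT.2 (-(|a| + |b|)) (|a| + |b|)
    have hm0 : (0 : E) ≤ |a| + |b| := add_nonneg (abs_nonneg a) (abs_nonneg b)
    refine ⟨cS + cT, dS + dT, ?_⟩
    intro e hae heb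
    have hem : |e| ≤ |a| + |b| := by
      refine sup_le ?_ ?_
      · exact heb.trans ((le_abs_self b).trans (le_add_of_nonneg_left (abs_nonneg a)))
      · exact (my_neg_le_neg hae).trans ((neg_le_abs a).trans
          (le_add_of_nonneg_right (abs_nonneg b)))
    have hfrag : ∀ g₁ g₂ : E, g₁ + g₂ = e → EDisj g₁ g₂ →
        -(|a| + |b|) ≤ g₁ ∧ g₁ ≤ |a| + |b| := by
      intro g₁ g₂ hsum hd
      have h1 : |g₁| ≤ |a| + |b| := ((abs_le_of_frag hd).trans_eq (by rw [hsum])).trans hem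
      refine ⟨?_, (le_abs_self g₁).trans h1⟩
      have h2 : -g₁ ≤ |a| + |b| := (neg_le_abs g₁).trans h1
      have h3 := my_neg_le_neg h2
      rwa [neg_neg] at h3
    constructor
    · have hcT : cT ≤ 0 := by
        have h0 := (hTcd 0 (by simpa using my_neg_le_neg hm0) hm0).1
        rwa [hT0] at h0
      have hcS : cS ≤ S e := by
        refine (hScd e ?_ ((le_abs_self e).trans hem)).1
        have h2 : -e ≤ |a| + |b| := (neg_le_abs e).trans hem
        have h3 := my_neg_le_neg h2
        rwa [neg_neg] at h3
      calc cS + cT ≤ S e + 0 := add_le_add hcS hcT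
      _ = S e + T 0 := by rw [hT0]
      _ ≤ R e := (hlub e).1 ⟨e, 0, add_zero e, edisj_zero e, rfl⟩
    · refine csSup_le (hne e) ?_
      rintro v ⟨g₁, g₂, hsum, hd, rfl⟩
      have h1 := hfrag g₁ g₂ hsum hd
      have h2 := hfrag g₂ g₁ (by rw [add_comm]; exact hsum) (edisj_symm hd)
      exact add_le_add (hScd g₁ h1.1 h1.2).2 (hTcd g₂ h2.1 h2.2).2
  have hSR : ∀ x, S x ≤ R x := by
    intro x
    have h := (hlub x).1 ⟨x, 0, add_zero x, edisj_zero x, rfl⟩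
    rwa [hT0, add_zero] at h
  have hTR : ∀ x, T x ≤ R x := by
    intro x
    have h := (hlub x).1 ⟨0, x, zero_add x, zero_edisj x, rfl⟩
    rwa [hS0, zero_add] at h
  intro f
  have h1 : V f ≤ R f := hmin R ⟨horth, hob⟩ hSR hTR f
  have h2 : R f ≤ V f := (hlub f).2 (hub f)
  have heq : R f = V f := le_antisymm h2 h1
  exact heq ▸ hlub f

end Main

theorem uryson_sup_inf_formula {E F : Type*} [Lattice E] [AddCommGroup E] [CovariantClass E E (· + ·) (· ≤ ·)] [Module ℝ E] [ConditionallyCompleteLattice F] [AddCommGroup F] [CovariantClass F F (· + ·) (· ≤ ·)] [Module ℝ F]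
    (S T V W : E → F) (hS : UrysonOp S) (hT : UrysonOp T)
    (hV : UrysonOp V ∧ (∀ x : E, S x ≤ V x) ∧ (∀ x : E, T x ≤ V x) ∧
      ∀ U : E → F, UrysonOp U → (∀ x : E, S x ≤ U x) → (∀ x : E, T x ≤ U x) →
        ∀ x : E, V x ≤ U x)
    (hW : UrysonOp W ∧ (∀ x : E, W x ≤ S x) ∧ (∀ x : E, W x ≤ T x) ∧
      ∀ U : E → F, UrysonOp U → (∀ x : E, U x ≤ S x) → (∀ x : E, U x ≤ T x) →
        ∀ x : E, U x ≤ W x) :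
    ∀ f : E,
      IsLUB {v : F | ∃ g₁ g₂ : E, g₁ + g₂ = f ∧ EDisj g₁ g₂ ∧ v = S g₁ + T g₂} (V f) ∧
      IsGLB {v : F | ∃ g₁ g₂ : E, g₁ + g₂ = f ∧ EDisj g₁ g₂ ∧ v = S g₁ + T g₂} (W f) := by
  intro f
  obtain ⟨hWu, hWS, hWT, hmax⟩ := hW
  constructor
  · exact main_lub S T V hS hT hV f
  · have hS' : UrysonOp (fun e => -(S e)) := uryson_neg hS
    have hT' : UrysonOp (fun e => -(T e)) := uryson_neg hT
    have hV' : UrysonOp (fun e => -(W e)) ∧ (∀ x : E, -(S x) ≤ -(W x)) ∧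
        (∀ x : E, -(T x) ≤ -(W x)) ∧
        ∀ U : E → F, UrysonOp U → (∀ x : E, -(S x) ≤ U x) → (∀ x : E, -(T x) ≤ U x) →
          ∀ x : E, -(W x) ≤ U x := by
      refine ⟨uryson_neg hWu, fun x => my_neg_le_neg (hWS x), fun x => my_neg_le_neg (hWT x),
        ?_⟩
      intro U hU hSU hTU x
      have h1 : ∀ x : E, -(U x) ≤ S x := by
        intro x
        have := my_neg_le_neg (hSU x)
        rwa [neg_neg] at this
      have h2 : ∀ x : E, -(U x) ≤ T x := by
        intro x
        have := my_neg_le_neg (hTU x)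
        rwa [neg_neg] at this
      have h3 := hmax (fun e => -(U e)) (uryson_neg hU) h1 h2 x
      have h4 := my_neg_le_neg h3
      rwa [neg_neg] at h4
    have hglb := main_lub (fun e => -(S e)) (fun e => -(T e)) (fun e => -(W e)) hS' hT' hV' f
    have hsetneg :
        {v : F | ∃ g₁ g₂ : E, g₁ + g₂ = f ∧ EDisj g₁ g₂ ∧ v = -(S g₁) + -(T g₂)} =
        {v : F | ∃ a ∈ {v : F | ∃ g₁ g₂ : E, g₁ + g₂ = f ∧ EDisj g₁ g₂ ∧ v = S g₁ + T g₂},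
          v = -a} := by
      ext v
      constructor
      · rintro ⟨g₁, g₂, h1, h2, rfl⟩
        exact ⟨S g₁ + T g₂, ⟨g₁, g₂, h1, h2, rfl⟩, (neg_add _ _).symm⟩
      · rintro ⟨a, ⟨g₁, g₂, h1, h2, rfl⟩, rfl⟩
        exact ⟨g₁, g₂, h1, h2, (neg_add _ _)⟩
    rw [hsetneg] at hglb
    exact isGLB_of_neg hglb
end

section
/- Let E, F be vector lattices with F Dedekind complete and T : E → F an abstract Uryson operator. Then |T(f)| ≤ |T|(f) for every f ∈ E, where |T| is the modulus of T in the Dedekind complete vector lattice U(E,F), given by |T|(f) = sup{T(g₁) − T(g₂) : f = g₁ ⊔ g₂}. -/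
open scoped BigOperators

lemma abs_le_abs_add_of_disj {E : Type*} [Lattice E] [AddCommGroup E]
    [CovariantClass E E (· + ·) (· ≤ ·)] (x y : E) (h : |x| ⊓ |y| = 0) :
    |x| ≤ |x + y| := by
  have h1 : |x| - |y| ≤ |x + y| := by
    rw [sub_le_iff_le_add]
    calc |x| = |(x + y) + (-y)| := by rw [add_neg_cancel_right]
    _ ≤ |x + y| + |(-y)| := abs_add_le _ _
    _ = |x + y| + |y| := by rw [abs_neg]
  have hsup : |x| ⊔ |y| = |x| + |y| := by
    have := inf_add_sup |x| |y|
    rw [h, zero_add] at this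
    exact this
  have : |x| = (|x| - |y|) ⊔ 0 := by
    have : (|x| - |y|) ⊔ (|y| - |y|) = (|x| ⊔ |y|) - |y| := by
      rw [← sup_sub]
    rw [sub_self] at this
    rw [this, hsup]
    abel
  rw [this]
  exact sup_le h1 (abs_nonneg _)

theorem abs_apply_le_modulus {E F : Type*} [Lattice E] [AddCommGroup E] [CovariantClass E E (· + ·) (· ≤ ·)] [Module ℝ E] [ConditionallyCompleteLattice F] [AddCommGroup F] [CovariantClass F F (· + ·) (· ≤ ·)] [Module ℝ F]
    (T : E → F) (hT : UrysonOp T) :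
    ∀ f : E, |T f| ≤
      sSup {v : F | ∃ g₁ g₂ : E, g₁ + g₂ = f ∧ EDisj g₁ g₂ ∧ v = T g₁ - T g₂} := by
  intro f
  have hT0 : T 0 = 0 := by
    have h := hT.1 0 0 (by simp [EDisj])
    rw [add_zero] at h
    exact (left_eq_add.mp h)
  set S := {v : F | ∃ g₁ g₂ : E, g₁ + g₂ = f ∧ EDisj g₁ g₂ ∧ v = T g₁ - T g₂} with hS
  obtain ⟨c, d, hcd⟩ := hT.2 (-|f|) |f|
  have hbdd : BddAbove S := by
    refine ⟨d - c, ?_⟩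
    rintro v ⟨g₁, g₂, hsum, hd, rfl⟩
    have h1 : |g₁| ≤ |f| := by
      rw [← hsum]; exact abs_le_abs_add_of_disj g₁ g₂ hd
    have h2 : |g₂| ≤ |f| := by
      rw [← hsum, add_comm]
      exact abs_le_abs_add_of_disj g₂ g₁ (by rw [inf_comm]; exact hd)
    have hb1 := hcd g₁ (neg_le.mpr ((neg_le_abs g₁).trans h1))
      (le_trans (le_abs_self g₁) h1)
    have hb2 := hcd g₂ (neg_le.mpr ((neg_le_abs g₂).trans h2))
      (le_trans (le_abs_self g₂) h2)
    have : T g₁ - T g₂ ≤ d - c := sub_le_sub hb1.2 hb2.1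
    exact this
  have hmem1 : T f ∈ S := by
    refine ⟨f, 0, add_zero f, by simp [EDisj], by simp [hT0]⟩
  have hmem2 : -T f ∈ S := by
    refine ⟨0, f, zero_add f, by simp [EDisj], by simp [hT0]⟩
  have h1 : T f ≤ sSup S := le_csSup hbdd hmem1
  have h2 : -T f ≤ sSup S := le_csSup hbdd hmem2
  rw [abs]
  exact sup_le h1 h2
end

section
/- Let E, F be vector lattices with E atomless and having the principal projection property, F Dedekind complete, and T : E → F an order narrow positive abstract Uryson operator. Then for every x ∈ E and every band projection ρ on F, the operator ρ ∘ π^x T is order narrow, where π^x T(e) = sup{T(y) : y a fragment of both e and x}. -/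
open scoped BigOperators

section AuxLemmas
variable {G : Type*} [Lattice G] [AddCommGroup G] [CovariantClass G G (· + ·) (· ≤ ·)]

lemma edisj_symm_s17 {a b : G} (h : EDisj a b) : EDisj b a := by
  rwa [EDisj, inf_comm]

lemma edisj_zero_right (a : G) : EDisj a 0 := by
  rw [EDisj, abs_zero]
  exact inf_eq_right.2 (abs_nonneg a)

lemma inf_add_le_of_nonneg {a b c : G} (ha : 0 ≤ a) (hb : 0 ≤ b) (hc : 0 ≤ c) :
    (a + b) ⊓ c ≤ a ⊓ c + b ⊓ c := by
  have h1 : a ⊓ c + b ⊓ c = ((a + b) ⊓ (a + c)) ⊓ ((c + b) ⊓ (c + c)) := by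
    rw [inf_add, add_inf, add_inf]
  rw [h1]
  refine le_inf (le_inf inf_le_left ?_) (le_inf ?_ ?_)
  · exact inf_le_right.trans (le_add_of_nonneg_left ha)
  · exact inf_le_right.trans (le_add_of_nonneg_right hb)
  · exact inf_le_right.trans (le_add_of_nonneg_left hc)

lemma edisj_of_abs_le {a b c : G} (h : |a| ≤ |b|) (hbc : EDisj b c) : EDisj a c := by
  refine le_antisymm ?_ (le_inf (abs_nonneg a) (abs_nonneg c))
  calc |a| ⊓ |c| ≤ |b| ⊓ |c| := inf_le_inf_right _ h
    _ = 0 := hbc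

lemma edisj_add {a b c : G} (h1 : EDisj a c) (h2 : EDisj b c) : EDisj (a + b) c := by
  refine le_antisymm ?_ (le_inf (abs_nonneg _) (abs_nonneg c))
  calc |a + b| ⊓ |c| ≤ (|a| + |b|) ⊓ |c| := inf_le_inf_right _ (abs_add_le a b)
    _ ≤ |a| ⊓ |c| + |b| ⊓ |c| :=
      inf_add_le_of_nonneg (abs_nonneg a) (abs_nonneg b) (abs_nonneg c)
    _ = 0 := by rw [h1, h2, add_zero]

lemma edisj_neg {a c : G} (h : EDisj a c) : EDisj (-a) c := by
  rwa [EDisj, abs_neg]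

lemma edisj_sub {a b c : G} (h1 : EDisj a c) (h2 : EDisj b c) : EDisj (a - b) c := by
  rw [sub_eq_add_neg]; exact edisj_add h1 (edisj_neg h2)

lemma edisj_add_right {a b c : G} (h1 : EDisj c a) (h2 : EDisj c b) : EDisj c (a + b) :=
  edisj_symm_s17 (edisj_add (edisj_symm_s17 h1) (edisj_symm_s17 h2))

lemma edisj_sub_right {a b c : G} (h1 : EDisj c a) (h2 : EDisj c b) : EDisj c (a - b) :=
  edisj_symm_s17 (edisj_sub (edisj_symm_s17 h1) (edisj_symm_s17 h2))

lemma abs_le_abs_add_of_edisj {a b : G} (h : EDisj a b) : |b| ≤ |a + b| := by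
  have h1 : |b| ≤ |a + b| + |a| := by
    calc |b| = |(a + b) + (-a)| := by rw [add_neg_cancel_comm]
      _ ≤ |a + b| + |(-a)| := abs_add_le _ _
      _ = |a + b| + |a| := by rw [abs_neg]
  have h2 : |b| = |b| ⊓ (|a + b| + |a|) := (inf_eq_left.2 h1).symm
  calc |b| = (|a + b| + |a|) ⊓ |b| := by rw [inf_comm]; exact h2
    _ ≤ |a + b| ⊓ |b| + |a| ⊓ |b| :=
      inf_add_le_of_nonneg (abs_nonneg _) (abs_nonneg _) (abs_nonneg _)
    _ = |a + b| ⊓ |b| + 0 := by rw [h]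
    _ ≤ |a + b| := by rw [add_zero]; exact inf_le_left

lemma fragment_self (a : G) : Fragment a a := by
  rw [Fragment, sub_self]; exact edisj_zero_right a

lemma frag_abs_le {y f : G} (h : Fragment y f) : |y| ≤ |f| := by
  have := abs_le_abs_add_of_edisj (edisj_symm_s17 h)
  rwa [sub_add_cancel] at this

lemma fragment_trans {y f e : G} (h1 : Fragment y f) (h2 : Fragment f e) : Fragment y e := by
  have hyef : EDisj y (e - f) := edisj_of_abs_le (frag_abs_le h1) h2
  have : EDisj y ((f - y) + (e - f)) := edisj_add_right h1 hyef
  rwa [show (f - y) + (e - f) = e - y by abel] at this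

end AuxLemmas

section AuxOp
variable {E F : Type*}
variable [Lattice E] [AddCommGroup E] [CovariantClass E E (· + ·) (· ≤ ·)]
variable [Lattice F] [AddCommGroup F] [CovariantClass F F (· + ·) (· ≤ ·)]

lemma T_mono_frag {T : E → F} (hT : OrthAdditive T) (hTp : PositiveOp T)
    {y c : E} (h : Fragment y c) : T y ≤ T c := by
  have h1 : T (y + (c - y)) = T y + T (c - y) := hT y (c - y) h
  rw [add_sub_cancel] at h1
  rw [h1]
  exact le_add_of_nonneg_right (hTp _)

lemma bandproj_abs_le {ρ : F → F} (hρ : IsBandProjection ρ) (v : F) : |ρ v| ≤ |v| := by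
  obtain ⟨hadd, _, hpos⟩ := hρ
  have hv : ρ (v⁺) = ρ v + ρ (v⁻) := by
    rw [sub_eq_iff_eq_add.mp (posPart_sub_negPart v), hadd]
  have hρv : ρ v = ρ (v⁺) - ρ (v⁻) := by rw [hv]; abel
  calc |ρ v| = |ρ (v⁺) - ρ (v⁻)| := by rw [hρv]
    _ ≤ |ρ (v⁺)| + |ρ (v⁻)| := by
        rw [sub_eq_add_neg]
        exact (abs_add_le _ _).trans (by rw [abs_neg])
    _ = ρ (v⁺) + ρ (v⁻) := by
        rw [abs_of_nonneg (hpos _ (posPart_nonneg v)).1,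
            abs_of_nonneg (hpos _ (negPart_nonneg v)).1]
    _ ≤ v⁺ + v⁻ := add_le_add (hpos _ (posPart_nonneg v)).2 (hpos _ (negPart_nonneg v)).2
    _ = |v| := posPart_add_negPart v

end AuxOp

section AuxPPP
variable {E : Type*} [Lattice E] [AddCommGroup E] [CovariantClass E E (· + ·) (· ≤ ·)]

lemma ppp_band {π : E → E} {d : E}
    (hadd : ∀ a b : E, π (a + b) = π a + π b)
    (hpos : ∀ a : E, 0 ≤ a → 0 ≤ π a ∧ π a ≤ a)
    (hkill : ∀ a : E, EDisj a d → π a = 0)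
    (hfrag : ∀ a : E, EDisj (a - π a) d) :
    ∀ w a : E, EDisj w d → EDisj w (π a) := by
  have hsub : ∀ a b : E, π (a - b) = π a - π b := by
    intro a b
    have := hadd (a - b) b
    rw [sub_add_cancel] at this
    rw [eq_sub_iff_add_eq, ← this]
  have hidem : ∀ a : E, π (π a) = π a := by
    intro a
    have h0 : π (a - π a) = 0 := hkill _ (hfrag a)
    rw [hsub] at h0
    exact (sub_eq_zero.1 h0).symm
  have key : ∀ w a : E, EDisj w d → 0 ≤ a → EDisj w (π a) := by
    intro w a hwd ha
    set v := |w| ⊓ π a with hv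
    have hπa : 0 ≤ π a := (hpos a ha).1
    have hv0 : 0 ≤ v := le_inf (abs_nonneg w) hπa
    have hvw : |v| ≤ |w| := by
      rw [abs_of_nonneg hv0]; exact inf_le_left
    have hvd : EDisj v d := edisj_of_abs_le hvw hwd
    have hπv : π v = 0 := hkill v hvd
    have hvle : v ≤ π a := inf_le_right
    have h1 : π (π a - v) = π a := by rw [hsub, hidem, hπv, sub_zero]
    have h2 : π (π a - v) ≤ π a - v := (hpos _ (sub_nonneg.2 hvle)).2
    rw [h1] at h2
    have hvz : v ≤ 0 := by
      have := sub_le_sub_left h2 (π a)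
      simpa using this
    have hveq : v = 0 := le_antisymm hvz hv0
    rw [EDisj, abs_of_nonneg hπa]
    exact hveq
  intro w a hwd
  have hπ : π a = π (a⁺) - π (a⁻) := by
    rw [← hsub]; congr 1; exact (posPart_sub_negPart a).symm
  rw [hπ]
  exact edisj_sub_right (key w _ hwd (posPart_nonneg a)) (key w _ hwd (negPart_nonneg a))

end AuxPPP

section AuxPiX
variable {E F : Type*}
variable [Lattice E] [AddCommGroup E] [CovariantClass E E (· + ·) (· ≤ ·)]
variable [ConditionallyCompleteLattice F] [AddCommGroup F]
variable [CovariantClass F F (· + ·) (· ≤ ·)]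

lemma piX_eq {T : E → F} {x e w : E}
    (hwe : Fragment w e) (hwx : Fragment w x)
    (hmax : ∀ y : E, Fragment y e → Fragment y x → T y ≤ T w) :
    piX T x e = T w := by
  refine IsGreatest.csSup_eq ⟨⟨w, hwe, hwx, rfl⟩, ?_⟩
  rintro v ⟨y, hy, hyx, rfl⟩
  exact hmax y hy hyx

end AuxPiX

theorem piX_of_narrow_is_narrow {E F : Type*} [Lattice E] [AddCommGroup E] [CovariantClass E E (· + ·) (· ≤ ·)] [Module ℝ E] [ConditionallyCompleteLattice F] [AddCommGroup F] [CovariantClass F F (· + ·) (· ≤ ·)] [Module ℝ F]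
    (hA : AtomlessVL E) (hppp : HasPPP E)
    (T : E → F) (hT : UrysonOp T) (hTp : PositiveOp T) (hnar : OrderNarrow T)
    (x : E) (ρ : F → F) (hρ : IsBandProjection ρ) :
    OrderNarrow (fun e => ρ (piX T x e)) := by
  obtain ⟨horth, _⟩ := hT
  intro e
  obtain ⟨π, hπadd, hπpos, hπd, hπkill, hπfrag⟩ := hppp (e - x)
  set d : E := e - x with hd
  set z : E := π e with hz
  set w : E := e - z with hw
  have hband : ∀ v a : E, EDisj v d → EDisj v (π a) :=
    ppp_band hπadd hπpos hπkill hπfrag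
  have hwd : EDisj w d := hπfrag e
  have hwz : EDisj w z := hband w e hwd
  -- w is a fragment of e
  have hwe : Fragment w e := by
    rw [Fragment, show e - w = z by rw [hw]; abel]
    exact hwz
  -- w is a fragment of x
  have hxw : x - w = π x := by
    have : π x = π e - π d := by
      have h2 := hπadd x d
      rw [show x + d = e by rw [hd]; abel] at h2
      rw [eq_sub_iff_add_eq, ← h2]
    rw [this, hπd, hw, hd]; abel
  have hwx : Fragment w x := by
    rw [Fragment, hxw]
    exact hband w x hwd
  -- every common fragment of e and x is a fragment of w
  have hcommon : ∀ y : E, Fragment y e → Fragment y x → Fragment y w := by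
    intro y hye hyx
    have hyd : EDisj y d := by
      have := edisj_sub_right hye hyx
      rwa [show (e - y) - (x - y) = d by rw [hd]; abel] at this
    have hyπe : EDisj y z := hband y e hyd
    have : EDisj y ((e - y) - z) := edisj_sub_right hye hyπe
    rwa [show (e - y) - z = w - y by rw [hw]; abel] at this
  -- apply narrowness of T at w
  obtain ⟨ι, le, p, q, u, hne, hrefl, htrans, hdir, hdec, hanti, hglb, hbnd⟩ := hnar w
  refine ⟨ι, le, fun a => z + p a, fun a => q a, u, hne, hrefl, htrans, hdir, ?_, hanti, hglb, ?_⟩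
  · intro a
    obtain ⟨hsum, hdisj⟩ := hdec a
    have hqw : Fragment (q a) w := by
      rw [Fragment, show w - q a = p a by rw [← hsum]; abel]
      exact edisj_symm_s17 hdisj
    have hqz : EDisj (q a) z := edisj_of_abs_le (frag_abs_le hqw) hwz
    constructor
    · rw [add_assoc, show p a + q a = w from hsum, hw]; abel
    · exact edisj_add (edisj_symm_s17 hqz) hdisj
  · intro a
    obtain ⟨hsum, hdisj⟩ := hdec a
    have hpw : Fragment (p a) w := by
      rw [Fragment, show w - p a = q a by rw [← hsum]; abel]
      exact hdisj
    have hqw : Fragment (q a) w := by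
      rw [Fragment, show w - q a = p a by rw [← hsum]; abel]
      exact edisj_symm_s17 hdisj
    have hpz : EDisj (p a) z := edisj_of_abs_le (frag_abs_le hpw) hwz
    have hqz : EDisj (q a) z := edisj_of_abs_le (frag_abs_le hqw) hwz
    have hfg : EDisj (z + p a) (q a) := edisj_add (edisj_symm_s17 hqz) hdisj
    have hesum : (z + p a) + q a = e := by
      rw [add_assoc, hsum, hw]; abel
    -- piX at g a = q a
    have hg : piX T x (q a) = T (q a) := by
      refine piX_eq (fragment_self (q a)) (fragment_trans hqw hwx) ?_
      intro y hy _
      exact T_mono_frag horth hTp hy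
    -- piX at f a = z + p a
    have hf : piX T x (z + p a) = T (p a) := by
      refine piX_eq ?_ (fragment_trans hpw hwx) ?_
      · rw [Fragment, show (z + p a) - p a = z by abel]
        exact hpz
      · intro y hy hyx
        have hyabs : |y| ≤ |z + p a| := frag_abs_le hy
        have hyq : EDisj y (q a) := edisj_of_abs_le hyabs (hfg)
        have hye : Fragment y e := by
          rw [Fragment, show e - y = ((z + p a) - y) + q a by rw [← hesum]; abel]
          exact edisj_add_right hy hyq
        have hyw : Fragment y w := hcommon y hye hyx
        have hyp : Fragment y (p a) := by
          rw [Fragment, show p a - y = (w - y) - q a by rw [← hsum]; abel]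
          exact edisj_sub_right hyw hyq
        exact T_mono_frag horth hTp hyp
    have hρsub : ρ (T (p a)) - ρ (T (q a)) = ρ (T (p a) - T (q a)) := by
      have := hρ.1 (T (p a) - T (q a)) (T (q a))
      rw [sub_add_cancel] at this
      rw [this]; abel
    calc |(fun e => ρ (piX T x e)) (z + p a) - (fun e => ρ (piX T x e)) (q a)|
        = |ρ (T (p a) - T (q a))| := by simp only; rw [hf, hg, hρsub]
      _ ≤ |T (p a) - T (q a)| := bandproj_abs_le hρ _
      _ ≤ u a := hbnd a
end
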